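/- For every fixed ρ_v ∈ (−1,1), the map g(ρ_h) := ρ_h + v̂(ρ_h, ρ_v) is strictly increasing on the interval [|ρ_v|, 1) and is a bijection from [|ρ_v|, 1) onto [|ρ_v|, +∞). -/

import Mathlib

open Real

/-- The speed function of the Borodin-Ferrari dynamics, with the convention `v (0,0) = 0`. -/
noncomputable def speed (ρ : ℝ × ℝ) : ℝ :=
  if ρ = (0, 0) then 0
  else (1 / π) * (Real.sin (π * ρ.1) * Real.sin (π * ρ.2) / Real.sin (π * (ρ.1 + ρ.2)))

/-- The speed function in the rotated coordinates `ρ_h = ρ₁+ρ₂`, `ρ_v = ρ₁-ρ₂`. -/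
noncomputable def speedHat (ρh ρv : ℝ) : ℝ := speed ((ρh + ρv) / 2, (ρh - ρv) / 2)

lemma speedHat_formula (x ρv : ℝ) :
    speedHat x ρv = (1 / (2 * π)) * ((Real.cos (π * ρv) - Real.cos (π * x)) / Real.sin (π * x)) := by
  unfold speedHat speed
  by_cases h : ((x + ρv) / 2, (x - ρv) / 2) = ((0 : ℝ), (0 : ℝ))
  · rw [if_pos h]
    obtain ⟨h1, h2⟩ := Prod.mk.injEq .. ▸ h
    have hx : x = 0 := by linarith [(by linarith : x + ρv = 0), (by linarith : x - ρv = 0)]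
    have hv : ρv = 0 := by linarith [(by linarith : x + ρv = 0), (by linarith : x - ρv = 0)]
    simp [hx, hv]
  · rw [if_neg h]
    have key : Real.cos (π * ρv) - Real.cos (π * x)
        = 2 * (Real.sin (π * ((x + ρv) / 2)) * Real.sin (π * ((x - ρv) / 2))) := by
      rw [Real.cos_sub_cos]
      have e1 : (π * ρv + π * x) / 2 = π * ((x + ρv) / 2) := by ring
      have e2 : (π * ρv - π * x) / 2 = -(π * ((x - ρv) / 2)) := by ring
      rw [e1, e2, Real.sin_neg]
      ring
    have e3 : (x + ρv) / 2 + (x - ρv) / 2 = x := by ring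
    rw [e3, key]
    field_simp

/-- For every fixed `ρ_v ∈ (-1,1)`, the map `ρ_h ↦ ρ_h + v̂(ρ_h,ρ_v)` is strictly
increasing on `[|ρ_v|, 1)` and is a bijection from `[|ρ_v|, 1)` onto `[|ρ_v|, ∞)`. -/
theorem stmt8 (ρv : ℝ) (hρv : ρv ∈ Set.Ioo (-1 : ℝ) 1) :
    StrictMonoOn (fun ρh => ρh + speedHat ρh ρv) (Set.Ico |ρv| 1) ∧
    Set.BijOn (fun ρh => ρh + speedHat ρh ρv) (Set.Ico |ρv| 1) (Set.Ici |ρv|) := by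
  set a := |ρv| with ha_def
  set A := Real.cos (π * ρv) with hA_def
  set F : ℝ → ℝ := fun x => x + (1 / (2 * π)) * ((A - Real.cos (π * x)) / Real.sin (π * x))
    with hF_def
  have hFeq : (fun ρh => ρh + speedHat ρh ρv) = F := by
    funext x; rw [speedHat_formula]
  have ha0 : 0 ≤ a := abs_nonneg _
  have ha1 : a < 1 := abs_lt.2 hρv
  have hπ := Real.pi_pos
  -- cos (π * a) = A
  have hAa : Real.cos (π * a) = A := by
    rw [ha_def, hA_def, show π * |ρv| = |π * ρv| by
      rw [abs_mul, abs_of_pos hπ], Real.cos_abs]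
  -- F a = a
  have hFa : F a = a := by
    simp [hF_def, hAa]
  -- sin positive on Ioo a 1
  have hsin_pos : ∀ x ∈ Set.Ioo a 1, 0 < Real.sin (π * x) := fun x hx =>
    Real.sin_pos_of_pos_of_lt_pi (by nlinarith [hx.1, ha0]) (by nlinarith [hx.2])
  -- numerator nonneg on Ico a 1
  have hnum_nonneg : ∀ x ∈ Set.Ico a 1, 0 ≤ A - Real.cos (π * x) := by
    intro x hx
    have : Real.cos (π * x) ≤ Real.cos (π * a) :=
      Real.cos_le_cos_of_nonneg_of_le_pi (mul_nonneg hπ.le ha0) (by nlinarith [hx.2])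
        (by nlinarith [hx.1])
    rw [hAa] at this; linarith
  -- continuity
  have hcont : ContinuousOn F (Set.Ico a 1) := by
    by_cases hv0 : ρv = 0
    · -- a = 0, A = 1 ; F = x + c * tan (π*x/2) on [0,1)
      have ha : a = 0 := by simp [ha_def, hv0]
      have hA1 : A = 1 := by simp [hA_def, hv0]
      have key : Set.EqOn F (fun x => x + (1 / (2 * π)) * Real.tan (π * x / 2))
          (Set.Ico a 1) := by
        intro x hx
        rcases eq_or_lt_of_le hx.1 with h | h
        · simp [hF_def, ← h, ha, hA1]
        · have hx0 : 0 < x := by rw [ha] at h; exact h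
          have hs : 0 < Real.sin (π * x / 2) :=
            Real.sin_pos_of_pos_of_lt_pi (by positivity) (by nlinarith [hx.2])
          have hc : 0 < Real.cos (π * x / 2) :=
            Real.cos_pos_of_mem_Ioo ⟨by nlinarith, by nlinarith [hx.2]⟩
          have h2 : Real.sin (π * x) = 2 * Real.sin (π * x / 2) * Real.cos (π * x / 2) := by
            have := Real.sin_two_mul (π * x / 2)
            rwa [show 2 * (π * x / 2) = π * x from by ring] at this
          have h3 : Real.cos (π * x) = 1 - 2 * Real.sin (π * x / 2) ^ 2 := by
            have := Real.cos_two_mul (π * x / 2)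
            rw [show 2 * (π * x / 2) = π * x from by ring] at this
            nlinarith [Real.sin_sq_add_cos_sq (π * x / 2)]
          simp only [hF_def, hA1]
          rw [h2, h3, Real.tan_eq_sin_div_cos]
          congr 2
          rw [div_eq_div_iff (by positivity) hc.ne']
          ring
      refine ContinuousOn.congr ?_ key
      refine continuousOn_id.add (continuousOn_const.mul ?_)
      intro x hx
      have hc : Real.cos (π * x / 2) ≠ 0 := by
        refine ne_of_gt (Real.cos_pos_of_mem_Ioo ⟨?_, ?_⟩)
        · rw [ha] at hx; nlinarith [hx.1]
        · nlinarith [hx.2]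
      have htanc : ContinuousAt Real.tan (π * x / 2) := Real.continuousAt_tan.2 hc
      have hcont2 : ContinuousAt (fun x : ℝ => Real.tan (π * x / 2)) x :=
        ContinuousAt.comp (g := Real.tan) (f := fun x : ℝ => π * x / 2) htanc
          ((by fun_prop : Continuous fun x : ℝ => π * x / 2).continuousAt)
      exact hcont2.continuousWithinAt
    · -- a > 0, denominator nonzero on [a,1)
      have ha' : 0 < a := abs_pos.2 hv0
      refine continuousOn_id.add (continuousOn_const.mul (ContinuousOn.div ?_ ?_ ?_))
      · fun_prop
      · fun_prop
      · intro x hx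
        exact (Real.sin_pos_of_pos_of_lt_pi (by nlinarith [hx.1]) (by nlinarith [hx.2])).ne'
  -- derivative positive on interior
  have hder : ∀ x ∈ Set.Ioo a 1, HasDerivAt F
      (1 + (1 / (2 * π)) * ((π * Real.sin (π * x) * Real.sin (π * x)
        - (A - Real.cos (π * x)) * (Real.cos (π * x) * π)) / Real.sin (π * x) ^ 2)) x := by
    intro x hx
    have hs := (hsin_pos x hx).ne'
    have h1 : HasDerivAt (fun y : ℝ => π * y) π x := by
      simpa using (hasDerivAt_id x).const_mul π
    have hcos : HasDerivAt (fun y => Real.cos (π * y)) (-Real.sin (π * x) * π) x :=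
      (Real.hasDerivAt_cos (π * x)).comp x h1
    have hsin : HasDerivAt (fun y => Real.sin (π * y)) (Real.cos (π * x) * π) x :=
      (Real.hasDerivAt_sin (π * x)).comp x h1
    have hnum : HasDerivAt (fun y => A - Real.cos (π * y)) (π * Real.sin (π * x)) x := by
      simpa [mul_comm] using hcos.const_sub A
    have hdiv := (hnum.div hsin hs).const_mul (1 / (2 * π))
    rw [hF_def]
    exact (hasDerivAt_id' x).add hdiv
  have hderpos : ∀ x ∈ interior (Set.Ico a 1), 0 < deriv F x := by
    rw [interior_Ico]
    intro x hx
    rw [(hder x hx).deriv]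
    have hs := hsin_pos x hx
    have hnn : 0 ≤ π * Real.sin (π * x) * Real.sin (π * x)
        - (A - Real.cos (π * x)) * (Real.cos (π * x) * π) := by
      have hA1 : A ≤ 1 := by rw [hA_def]; exact Real.cos_le_one _
      have hA2 : -1 ≤ A := by rw [hA_def]; exact Real.neg_one_le_cos _
      have hp : Real.sin (π * x) ^ 2 + Real.cos (π * x) ^ 2 = 1 := Real.sin_sq_add_cos_sq _
      have hc1 : Real.cos (π * x) ≤ 1 := Real.cos_le_one _
      have hc2 : -1 ≤ Real.cos (π * x) := Real.neg_one_le_cos _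
      have h1 : 0 ≤ 1 - A * Real.cos (π * x) := by
        nlinarith [mul_nonneg (sub_nonneg.2 hA1) (sub_nonneg.2 hc1),
          mul_nonneg (by linarith : (0:ℝ) ≤ A + 1) (by linarith : (0:ℝ) ≤ Real.cos (π * x) + 1)]
      have hkey : π * Real.sin (π * x) * Real.sin (π * x)
          - (A - Real.cos (π * x)) * (Real.cos (π * x) * π)
          = π * (1 - A * Real.cos (π * x)) := by linear_combination π * hp
      rw [hkey]
      exact mul_nonneg hπ.le h1
    have : 0 ≤ (1 / (2 * π)) * ((π * Real.sin (π * x) * Real.sin (π * x)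
        - (A - Real.cos (π * x)) * (Real.cos (π * x) * π)) / Real.sin (π * x) ^ 2) :=
      mul_nonneg (by positivity) (div_nonneg hnn (sq_nonneg _))
    linarith
  have hmono : StrictMonoOn F (Set.Ico a 1) :=
    strictMonoOn_of_deriv_pos (convex_Ico a 1) hcont hderpos
  rw [hFeq]
  refine ⟨hmono, ?_, hmono.injOn, ?_⟩
  · -- MapsTo
    intro x hx
    have h1 : 0 ≤ Real.sin (π * x) :=
      Real.sin_nonneg_of_nonneg_of_le_pi (mul_nonneg hπ.le (ha0.trans hx.1))
        (by nlinarith [hx.2])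
    have h2 := hnum_nonneg x hx
    have : 0 ≤ (1 / (2 * π)) * ((A - Real.cos (π * x)) / Real.sin (π * x)) :=
      mul_nonneg (by positivity) (div_nonneg h2 h1)
    have := hx.1
    simp only [hF_def, Set.mem_Ici]
    linarith
  · -- SurjOn
    intro y hy
    have hy' : a ≤ y := hy
    -- find t ∈ Ioo a 1 with y ≤ F t
    have hAgt : -1 < A := by
      rw [← hAa]
      have h := Real.cos_lt_cos_of_nonneg_of_le_pi (x := π * a) (y := π)
        (mul_nonneg hπ.le ha0) le_rfl (by nlinarith)
      rwa [Real.cos_pi] at h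
    have hIoo : Set.Ioo a 1 ∈ nhdsWithin (1 : ℝ) (Set.Iio 1) :=
      Ioo_mem_nhdsLT_of_mem ⟨ha1, le_refl 1⟩
    have h1 : Filter.Tendsto (fun x => Real.sin (π * x)) (nhdsWithin (1 : ℝ) (Set.Iio 1))
        (nhdsWithin (0 : ℝ) (Set.Ioi 0)) := by
      rw [tendsto_nhdsWithin_iff]
      constructor
      · have : Filter.Tendsto (fun x => Real.sin (π * x)) (nhds (1 : ℝ))
            (nhds (Real.sin (π * 1))) := (by fun_prop : Continuous fun x => Real.sin (π * x)).tendsto 1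
        simpa [Real.sin_pi] using this.mono_left nhdsWithin_le_nhds
      · filter_upwards [hIoo] with x hx using hsin_pos x hx
    have h2 : Filter.Tendsto (fun x => (Real.sin (π * x))⁻¹) (nhdsWithin (1 : ℝ) (Set.Iio 1))
        Filter.atTop := tendsto_inv_nhdsGT_zero.comp h1
    have h3 : Filter.Tendsto (fun x => (1 / (2 * π)) * (A - Real.cos (π * x)))
        (nhdsWithin (1 : ℝ) (Set.Iio 1)) (nhds ((1 / (2 * π)) * (A + 1))) := by
      have : Filter.Tendsto (fun x => (1 / (2 * π)) * (A - Real.cos (π * x))) (nhds (1 : ℝ))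
          (nhds ((1 / (2 * π)) * (A - Real.cos (π * 1)))) :=
        (by fun_prop : Continuous fun x => (1 / (2 * π)) * (A - Real.cos (π * x))).tendsto 1
      simpa [Real.cos_pi, sub_neg_eq_add] using this.mono_left nhdsWithin_le_nhds
    have hposC : 0 < (1 / (2 * π)) * (A + 1) :=
      mul_pos (by positivity) (by linarith)
    have h4 := h3.pos_mul_atTop hposC h2
    have h5 : Filter.Tendsto F (nhdsWithin (1 : ℝ) (Set.Iio 1)) Filter.atTop := by
      have hid : Filter.Tendsto (fun x : ℝ => x) (nhdsWithin (1 : ℝ) (Set.Iio 1))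
          (nhds (1 : ℝ)) := Filter.Tendsto.mono_left Filter.tendsto_id nhdsWithin_le_nhds
      have := hid.add_atTop h4
      refine this.congr fun x => ?_
      simp only [hF_def]
      rw [div_eq_mul_inv]
      ring
    obtain ⟨t, hty, htIoo⟩ := ((h5.eventually_ge_atTop y).and hIoo).exists
    have hsub : Set.Icc a t ⊆ Set.Ico a 1 := fun z hz => ⟨hz.1, lt_of_le_of_lt hz.2 htIoo.2⟩
    have hivt := intermediate_value_Icc (le_of_lt htIoo.1) (hcont.mono hsub)
    have hymem : y ∈ Set.Icc (F a) (F t) := ⟨by rw [hFa]; exact hy', hty⟩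
    obtain ⟨x, hxmem, hFx⟩ := hivt hymem
    exact ⟨x, hsub hxmem, hFx⟩
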